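/- For all m, n > 0 there exist C > 0 and δ₀ > 0 such that for every δ ∈ (0, δ₀] and every u ≥ 0: 2m² ∫_{(n/m)u + 1/δ}^{∞} v e^{−m² v²} I₀(2 m n v u) e^{−n² u²} dv ≤ C e^{−m²/(4δ²)}. -/

import Mathlib

open MeasureTheory

/-- The modified Bessel function `I₀(y) = (1/π) ∫₀^π e^{y cos φ} dφ`. -/
noncomputable def besselI0 (y : ℝ) : ℝ :=
  (1 / Real.pi) * ∫ φ in (0:ℝ)..Real.pi, Real.exp (y * Real.cos φ)

open Real Set Filter

open MeasureTheory Real Set Filter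

lemma my_sqrt_add_le {a b : ℝ} (ha : 0 ≤ a) (hb : 0 ≤ b) :
    Real.sqrt (a + b) ≤ Real.sqrt a + Real.sqrt b := by
  have h : a + b ≤ (Real.sqrt a + Real.sqrt b) ^ 2 := by
    nlinarith [Real.sq_sqrt ha, Real.sq_sqrt hb,
      mul_nonneg (Real.sqrt_nonneg a) (Real.sqrt_nonneg b)]
  calc Real.sqrt (a + b) ≤ Real.sqrt ((Real.sqrt a + Real.sqrt b) ^ 2) :=
        Real.sqrt_le_sqrt h
    _ = Real.sqrt a + Real.sqrt b :=
        Real.sqrt_sq (by positivity)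

lemma my_sqrt_le_exp {w : ℝ} (hw : 0 ≤ w) : Real.sqrt w ≤ Real.exp (w ^ 2 / 4) := by
  have h1 : Real.sqrt w ≤ (1 + w) / 2 := by
    nlinarith [Real.sq_sqrt hw, sq_nonneg (Real.sqrt w - 1)]
  have h2 : (1 + w) / 2 ≤ 1 + w ^ 2 / 4 := by nlinarith [sq_nonneg (w - 1)]
  have h3 : 1 + w ^ 2 / 4 ≤ Real.exp (w ^ 2 / 4) := by
    have := Real.add_one_le_exp (w ^ 2 / 4); linarith
  linarith

lemma my_tail_integrable {k c b : ℝ} (hk : 0 < k) (hcb : c ≤ b) :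
    IntegrableOn (fun v => (v - c) * Real.exp (-k * (v - c) ^ 2)) (Ioi b) ∧
    ∫ v in Ioi b, (v - c) * Real.exp (-k * (v - c) ^ 2) =
      (1 / (2 * k)) * Real.exp (-k * (b - c) ^ 2) := by
  set g : ℝ → ℝ := fun v => -(1 / (2 * k)) * Real.exp (-k * (v - c) ^ 2) with hg
  have hderiv : ∀ x ∈ Ioi b, HasDerivAt g ((x - c) * Real.exp (-k * (x - c) ^ 2)) x := by
    intro x _
    have h1 : HasDerivAt (fun v : ℝ => -k * (v - c) ^ 2) (-k * (2 * (x - c))) x := by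
      simpa using (((hasDerivAt_id x).sub_const c).pow 2).const_mul (-k)
    have h2 := (h1.exp).const_mul (-(1 / (2 * k)))
    refine h2.congr_deriv ?_
    have hk0 : k ≠ 0 := hk.ne'
    have hkk : -(1 / (2 * k)) * (-k * 2) = 1 := by field_simp
    linear_combination ((x - c) * Real.exp (-k * (x - c) ^ 2)) * hkk
  have hcont : ContinuousWithinAt g (Ici b) b := by
    apply Continuous.continuousWithinAt
    continuity
  have hnn : ∀ x ∈ Ioi b, 0 ≤ (x - c) * Real.exp (-k * (x - c) ^ 2) := by
    intro x hx
    have h : c ≤ x := hcb.trans (le_of_lt hx)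
    have := Real.exp_pos (-k * (x - c) ^ 2)
    nlinarith
  have htend : Tendsto g atTop (nhds 0) := by
    have h1 : Tendsto (fun v : ℝ => -k * (v - c) ^ 2) atTop atBot := by
      apply Tendsto.const_mul_atTop_of_neg (neg_lt_zero.mpr hk)
      have : Tendsto (fun v : ℝ => v - c) atTop atTop :=
        tendsto_atTop_add_const_right atTop (-c) tendsto_id
      exact (tendsto_pow_atTop two_ne_zero).comp this
    have h2 : Tendsto g atTop (nhds (-(1 / (2 * k)) * 0)) :=
      (Real.tendsto_exp_atBot.comp h1).const_mul _
    simpa using h2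
  refine ⟨integrableOn_Ioi_deriv_of_nonneg hcont hderiv hnn htend, ?_⟩
  rw [integral_Ioi_of_hasDerivAt_of_nonneg hcont hderiv hnn htend]
  simp only [hg, zero_sub, neg_mul, neg_neg, sub_neg_eq_add, zero_add]

lemma besselI0_nonneg (y : ℝ) : 0 ≤ besselI0 y := by
  unfold besselI0
  apply mul_nonneg (by positivity)
  exact intervalIntegral.integral_nonneg Real.pi_pos.le fun x _ => (Real.exp_pos _).le

lemma besselI0_le_exp {y : ℝ} (hy : 0 ≤ y) : besselI0 y ≤ Real.exp y := by
  unfold besselI0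
  have h : ∫ φ in (0:ℝ)..Real.pi, Real.exp (y * Real.cos φ) ≤
      ∫ _φ in (0:ℝ)..Real.pi, Real.exp y := by
    apply intervalIntegral.integral_mono_on Real.pi_pos.le
    · exact (Real.continuous_exp.comp (continuous_const.mul Real.continuous_cos)).intervalIntegrable _ _
    · exact intervalIntegrable_const
    · intro x _
      have : y * Real.cos x ≤ y * 1 := mul_le_mul_of_nonneg_left (Real.cos_le_one x) hy
      simpa using Real.exp_le_exp.2 this
  rw [intervalIntegral.integral_const] at h
  calc (1 / Real.pi) * ∫ φ in (0:ℝ)..Real.pi, Real.exp (y * Real.cos φ)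
      ≤ (1 / Real.pi) * ((Real.pi - 0) • Real.exp y) :=
        mul_le_mul_of_nonneg_left h (by positivity)
    _ = Real.exp y := by
        rw [sub_zero, smul_eq_mul]
        field_simp

lemma besselI0_le_sqrt {y : ℝ} (hy : 0 < y) :
    besselI0 y ≤ Real.sqrt (Real.pi / (2 * y)) * Real.exp y := by
  have hpi := Real.pi_pos
  set b : ℝ := 2 * y / Real.pi ^ 2 with hb
  have hbpos : 0 < b := by positivity
  have step1 : ∫ φ in (0:ℝ)..Real.pi, Real.exp (y * Real.cos φ) ≤
      ∫ φ in (0:ℝ)..Real.pi, Real.exp y * Real.exp (-b * φ ^ 2) := by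
    apply intervalIntegral.integral_mono_on Real.pi_pos.le
    · exact (Real.continuous_exp.comp (continuous_const.mul Real.continuous_cos)).intervalIntegrable _ _
    · exact ((continuous_const.mul (Real.continuous_exp.comp (by continuity)))).intervalIntegrable _ _
    · intro x hx
      rw [← Real.exp_add]
      apply Real.exp_le_exp.2
      have habs : |x| ≤ Real.pi := by
        rw [abs_of_nonneg hx.1]; exact hx.2
      have hcos := Real.cos_le_one_sub_mul_cos_sq habs
      have h1 := mul_le_mul_of_nonneg_left hcos hy.le
      have h2 : y * (1 - 2 / Real.pi ^ 2 * x ^ 2) = y + -(2 * y / Real.pi ^ 2) * x ^ 2 := by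
        ring
      rw [hb]
      linarith
  have step2 : ∫ φ in (0:ℝ)..Real.pi, Real.exp y * Real.exp (-b * φ ^ 2) =
      Real.exp y * ∫ φ in (0:ℝ)..Real.pi, Real.exp (-b * φ ^ 2) :=
    intervalIntegral.integral_const_mul _ _
  have step3 : ∫ φ in (0:ℝ)..Real.pi, Real.exp (-b * φ ^ 2) ≤
      ∫ φ : ℝ, Real.exp (-b * φ ^ 2) := by
    rw [intervalIntegral.integral_of_le Real.pi_pos.le]
    exact setIntegral_le_integral (integrable_exp_neg_mul_sq hbpos)
      (Filter.Eventually.of_forall fun x => (Real.exp_pos _).le)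
  have step4 : ∫ φ : ℝ, Real.exp (-b * φ ^ 2) = Real.sqrt (Real.pi / b) :=
    integral_gaussian b
  have hsq : Real.sqrt (Real.pi / b) = Real.pi * Real.sqrt (Real.pi / (2 * y)) := by
    have h1 : Real.pi / b = Real.pi ^ 2 * (Real.pi / (2 * y)) := by
      field_simp [hb]
      rw [hb]; field_simp
    rw [h1, Real.sqrt_mul (by positivity), Real.sqrt_sq hpi.le]
  unfold besselI0
  calc (1 / Real.pi) * ∫ φ in (0:ℝ)..Real.pi, Real.exp (y * Real.cos φ)
      ≤ (1 / Real.pi) * (Real.exp y * Real.sqrt (Real.pi / b)) := by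
        apply mul_le_mul_of_nonneg_left _ (by positivity)
        calc _ ≤ _ := step1
          _ = _ := step2
          _ ≤ Real.exp y * ∫ φ : ℝ, Real.exp (-b * φ ^ 2) :=
              mul_le_mul_of_nonneg_left step3 (Real.exp_pos _).le
          _ = _ := by rw [step4]
    _ = Real.sqrt (Real.pi / (2 * y)) * Real.exp y := by
        rw [hsq]
        field_simp

set_option maxHeartbeats 2000000 in
/-- Gaussian–Bessel tail estimate: for all `m, n > 0` there exist `C > 0` and `δ₀ > 0`
such that for every `0 < δ ≤ δ₀` and every `u ≥ 0`,
`2m² ∫_{(n/m)u + 1/δ}^∞ v e^{−m²v²} I₀(2mnvu) e^{−n²u²} dv ≤ C e^{−m²/(4δ²)}`. -/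
theorem gaussian_bessel_tail (m n : ℝ) (hm : 0 < m) (hn : 0 < n) :
    ∃ C > 0, ∃ δ₀ > 0, ∀ δ : ℝ, 0 < δ → δ ≤ δ₀ → ∀ u : ℝ, 0 ≤ u →
      2 * m ^ 2 * ∫ v in Set.Ioi ((n / m) * u + 1 / δ),
          v * Real.exp (-m ^ 2 * v ^ 2) * besselI0 (2 * m * n * v * u) *
            Real.exp (-n ^ 2 * u ^ 2)
        ≤ C * Real.exp (-m ^ 2 / (4 * δ ^ 2)) := by
  have hpi := Real.pi_pos
  set E : ℝ := Real.sqrt (Real.pi / (4 * m ^ 2 * n)) + Real.sqrt (Real.pi / (4 * m ^ 2))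
    with hE
  have hEnn : 0 ≤ E := by positivity
  refine ⟨2 * Real.exp (n ^ 2) + 2 * E, by positivity, 1, one_pos, ?_⟩
  intro δ hδ hδ1 u hu
  set a : ℝ := (n / m) * u + 1 / δ with ha
  have ha0 : 0 < a := by positivity
  have haδ : 1 / δ ≤ a := le_add_of_nonneg_left (by positivity)
  clear_value a
  have hexpfin : Real.exp (-(m ^ 2 / 2) * (1 / δ) ^ 2) ≤ Real.exp (-m ^ 2 / (4 * δ ^ 2)) := by
    apply Real.exp_le_exp.2
    have he : -(m ^ 2 / 2) * (1 / δ) ^ 2 = -(m ^ 2 / (2 * δ ^ 2)) := by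
      field_simp
    rw [he, neg_div, neg_le_neg_iff]
    gcongr
    norm_num
  rcases le_total u 1 with h1 | h1
  · -- case u ≤ 1
    obtain ⟨hint, hval⟩ := my_tail_integrable (k := m ^ 2 / 2) (c := 0) (b := a)
      (by positivity) ha0.le
    have key : (∫ v in Set.Ioi a,
        v * Real.exp (-m ^ 2 * v ^ 2) * besselI0 (2 * m * n * v * u) *
          Real.exp (-n ^ 2 * u ^ 2)) ≤
        Real.exp (n ^ 2) * ((1 / (2 * (m ^ 2 / 2))) * Real.exp (-(m ^ 2 / 2) * (a - 0) ^ 2)) := by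
      have hmono := integral_mono_of_nonneg
        (f := fun v => v * Real.exp (-m ^ 2 * v ^ 2) * besselI0 (2 * m * n * v * u) *
          Real.exp (-n ^ 2 * u ^ 2))
        (g := fun v => Real.exp (n ^ 2) * ((v - 0) * Real.exp (-(m ^ 2 / 2) * (v - 0) ^ 2)))
        (μ := volume.restrict (Set.Ioi a))
        ?nng (hint.const_mul _) ?les
      case nng =>
        apply ae_restrict_of_forall_mem measurableSet_Ioi
        intro v hv
        have hv0 : 0 < v := ha0.trans hv
        exact mul_nonneg (mul_nonneg (mul_nonneg hv0.le (Real.exp_pos _).le)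
          (besselI0_nonneg _)) (Real.exp_pos _).le
      case les =>
        apply ae_restrict_of_forall_mem measurableSet_Ioi
        intro v hv
        have hv0 : 0 < v := ha0.trans hv
        have hy0 : 0 ≤ 2 * m * n * v * u := by positivity
        have hI := besselI0_le_exp hy0
        calc v * Real.exp (-m ^ 2 * v ^ 2) * besselI0 (2 * m * n * v * u) *
              Real.exp (-n ^ 2 * u ^ 2)
            ≤ v * Real.exp (-m ^ 2 * v ^ 2) * Real.exp (2 * m * n * v * u) *
              Real.exp (-n ^ 2 * u ^ 2) :=
              mul_le_mul_of_nonneg_right (mul_le_mul_of_nonneg_left hI (by positivity))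
                (Real.exp_pos _).le
          _ = v * (Real.exp (-m ^ 2 * v ^ 2) * Real.exp (2 * m * n * v * u) *
              Real.exp (-n ^ 2 * u ^ 2)) := by ring
          _ = v * Real.exp (-m ^ 2 * v ^ 2 + 2 * m * n * v * u + -n ^ 2 * u ^ 2) := by
              rw [← Real.exp_add, ← Real.exp_add]
          _ ≤ v * Real.exp (n ^ 2 + -(m ^ 2 / 2) * v ^ 2) := by
              apply mul_le_mul_of_nonneg_left _ hv0.le
              apply Real.exp_le_exp.2
              have hu2 : u ^ 2 ≤ 1 := by nlinarith
              nlinarith [sq_nonneg (m * v - 2 * n * u), sq_nonneg n]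
          _ = Real.exp (n ^ 2) * ((v - 0) * Real.exp (-(m ^ 2 / 2) * (v - 0) ^ 2)) := by
              rw [sub_zero, Real.exp_add]; ring
      calc (∫ v in Set.Ioi a, v * Real.exp (-m ^ 2 * v ^ 2) * besselI0 (2 * m * n * v * u) *
              Real.exp (-n ^ 2 * u ^ 2)) ≤ _ := hmono
        _ = Real.exp (n ^ 2) *
            ∫ v in Set.Ioi a, (v - 0) * Real.exp (-(m ^ 2 / 2) * (v - 0) ^ 2) :=
            integral_const_mul _ _
        _ = _ := by rw [hval]
    have hstep : Real.exp (-(m ^ 2 / 2) * (a - 0) ^ 2) ≤ Real.exp (-(m ^ 2 / 2) * (1 / δ) ^ 2) := by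
      apply Real.exp_le_exp.2
      have haa : (1 / δ) ^ 2 ≤ a ^ 2 := pow_le_pow_left₀ (by positivity) haδ 2
      nlinarith [mul_le_mul_of_nonneg_left haa (by positivity : (0:ℝ) ≤ m ^ 2 / 2)]
    calc 2 * m ^ 2 * ∫ v in Set.Ioi a,
            v * Real.exp (-m ^ 2 * v ^ 2) * besselI0 (2 * m * n * v * u) *
              Real.exp (-n ^ 2 * u ^ 2)
        ≤ 2 * m ^ 2 * (Real.exp (n ^ 2) *
            ((1 / (2 * (m ^ 2 / 2))) * Real.exp (-(m ^ 2 / 2) * (a - 0) ^ 2))) :=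
          mul_le_mul_of_nonneg_left key (by positivity)
      _ = 2 * Real.exp (n ^ 2) * Real.exp (-(m ^ 2 / 2) * (a - 0) ^ 2) := by
          field_simp
      _ ≤ 2 * Real.exp (n ^ 2) * Real.exp (-m ^ 2 / (4 * δ ^ 2)) :=
          mul_le_mul_of_nonneg_left (hstep.trans hexpfin) (by positivity)
      _ ≤ (2 * Real.exp (n ^ 2) + 2 * E) * Real.exp (-m ^ 2 / (4 * δ ^ 2)) := by
          nlinarith [mul_nonneg hEnn (Real.exp_pos (-m ^ 2 / (4 * δ ^ 2))).le]
  · -- case 1 ≤ u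
    have hu0 : 0 < u := lt_of_lt_of_le one_pos h1
    set c : ℝ := (n / m) * u with hc
    have hc0 : 0 ≤ c := by positivity
    have hca : c ≤ a := by
      rw [ha]; exact le_add_of_nonneg_right (by positivity)
    clear_value c
    obtain ⟨hint, hval⟩ := my_tail_integrable (k := m ^ 2 / 2) (c := c) (b := a)
      (by positivity) hca
    have key : (∫ v in Set.Ioi a,
        v * Real.exp (-m ^ 2 * v ^ 2) * besselI0 (2 * m * n * v * u) *
          Real.exp (-n ^ 2 * u ^ 2)) ≤
        E * ((1 / (2 * (m ^ 2 / 2))) * Real.exp (-(m ^ 2 / 2) * (a - c) ^ 2)) := by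
      have hmono := integral_mono_of_nonneg
        (f := fun v => v * Real.exp (-m ^ 2 * v ^ 2) * besselI0 (2 * m * n * v * u) *
          Real.exp (-n ^ 2 * u ^ 2))
        (g := fun v => E * ((v - c) * Real.exp (-(m ^ 2 / 2) * (v - c) ^ 2)))
        (μ := volume.restrict (Set.Ioi a))
        ?nng (hint.const_mul _) ?les
      case nng =>
        apply ae_restrict_of_forall_mem measurableSet_Ioi
        intro v hv
        have hv0 : 0 < v := ha0.trans hv
        exact mul_nonneg (mul_nonneg (mul_nonneg hv0.le (Real.exp_pos _).le)
          (besselI0_nonneg _)) (Real.exp_pos _).le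
      case les =>
        apply ae_restrict_of_forall_mem measurableSet_Ioi
        intro v hv
        have hv0 : 0 < v := ha0.trans hv
        have hm0 : m ≠ 0 := hm.ne'
        have hn0 : n ≠ 0 := hn.ne'
        have hu0' : u ≠ 0 := hu0.ne'
        have hv0' : v ≠ 0 := hv0.ne'
        have hvc : 1 / δ < v - c := by
          have hv' : a < v := hv
          rw [ha] at hv'
          linarith
        have hvc0 : 0 < v - c := lt_trans (by positivity) hvc
        obtain ⟨W, hWdef⟩ : ∃ W : ℝ, W = m * (v - c) := ⟨_, rfl⟩
        have hWm : m ≤ W := by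
          have h1δ : (1:ℝ) ≤ 1 / δ := one_le_one_div hδ hδ1
          have h2 : (1:ℝ) < v - c := lt_of_le_of_lt h1δ hvc
          rw [hWdef]
          nlinarith
        have hW0 : 0 < W := lt_of_lt_of_le hm hWm
        have hy : 0 < 2 * m * n * v * u := by positivity
        have hI := besselI0_le_sqrt hy
        have hmvnu : m * v - n * u = W := by
          rw [hWdef, hc]
          field_simp
        have hexpW : Real.exp (-m ^ 2 * v ^ 2) * Real.exp (2 * m * n * v * u) *
            Real.exp (-n ^ 2 * u ^ 2) = Real.exp (-W ^ 2) := by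
          rw [← Real.exp_add, ← Real.exp_add]
          apply congrArg Real.exp
          rw [← hmvnu]; ring
        have hvS : v * Real.sqrt (Real.pi / (2 * (2 * m * n * v * u))) ≤
            Real.sqrt (Real.pi / (4 * m ^ 2 * n)) * Real.exp (W ^ 2 / 4) +
            Real.sqrt (Real.pi / (4 * m ^ 2)) := by
          have e1 : v * Real.sqrt (Real.pi / (2 * (2 * m * n * v * u))) =
              Real.sqrt (v ^ 2 * (Real.pi / (2 * (2 * m * n * v * u)))) := by
            rw [Real.sqrt_mul (sq_nonneg v), Real.sqrt_sq hv0.le]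
          have e2 : v ^ 2 * (Real.pi / (2 * (2 * m * n * v * u))) =
              Real.pi * W / (4 * m ^ 2 * n * u) + Real.pi / (4 * m ^ 2) := by
            rw [← hmvnu,
              div_add_div _ _ (by positivity : (0:ℝ) < 4 * m ^ 2 * n * u).ne'
                (by positivity : (0:ℝ) < 4 * m ^ 2).ne',
              mul_div_assoc',
              div_eq_div_iff (by positivity : (0:ℝ) < 2 * (2 * m * n * v * u)).ne'
                (by positivity : (0:ℝ) < 4 * m ^ 2 * n * u * (4 * m ^ 2)).ne']
            ring
          rw [e1, e2]
          have hA : 0 ≤ Real.pi * W / (4 * m ^ 2 * n * u) :=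
            div_nonneg (mul_nonneg hpi.le hW0.le) (by positivity)
          have t1 : Real.sqrt (Real.pi * W / (4 * m ^ 2 * n * u) + Real.pi / (4 * m ^ 2)) ≤
              Real.sqrt (Real.pi * W / (4 * m ^ 2 * n * u)) +
              Real.sqrt (Real.pi / (4 * m ^ 2)) :=
            my_sqrt_add_le hA (by positivity)
          have t2 : Real.sqrt (Real.pi * W / (4 * m ^ 2 * n * u)) ≤
              Real.sqrt (Real.pi / (4 * m ^ 2 * n) * W) := by
            apply Real.sqrt_le_sqrt
            have e3 : Real.pi / (4 * m ^ 2 * n) * W = Real.pi * W / (4 * m ^ 2 * n) := by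
              ring
            rw [e3, div_le_div_iff₀ (by positivity) (by positivity)]
            nlinarith [mul_nonneg (mul_nonneg (mul_nonneg hpi.le hW0.le)
              (by positivity : (0:ℝ) ≤ 4 * m ^ 2 * n)) (sub_nonneg.2 h1)]
          have t3 : Real.sqrt (Real.pi / (4 * m ^ 2 * n) * W) =
              Real.sqrt (Real.pi / (4 * m ^ 2 * n)) * Real.sqrt W := by
            rw [Real.sqrt_mul (by positivity)]
          have t4 : Real.sqrt W ≤ Real.exp (W ^ 2 / 4) := my_sqrt_le_exp hW0.le
          calc Real.sqrt (Real.pi * W / (4 * m ^ 2 * n * u) + Real.pi / (4 * m ^ 2))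
              ≤ Real.sqrt (Real.pi * W / (4 * m ^ 2 * n * u)) +
                Real.sqrt (Real.pi / (4 * m ^ 2)) := t1
            _ ≤ Real.sqrt (Real.pi / (4 * m ^ 2 * n)) * Real.sqrt W +
                Real.sqrt (Real.pi / (4 * m ^ 2)) := by
                rw [← t3]; exact add_le_add_left t2 _
            _ ≤ Real.sqrt (Real.pi / (4 * m ^ 2 * n)) * Real.exp (W ^ 2 / 4) +
                Real.sqrt (Real.pi / (4 * m ^ 2)) :=
                add_le_add_left (mul_le_mul_of_nonneg_left t4 (by positivity)) _
        have d1 : Real.exp (W ^ 2 / 4) * Real.exp (-W ^ 2) ≤ Real.exp (-W ^ 2 / 2) := by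
          rw [← Real.exp_add]
          exact Real.exp_le_exp.2 (by nlinarith [sq_nonneg W])
        have d2 : Real.exp (-W ^ 2) ≤ Real.exp (-W ^ 2 / 2) :=
          Real.exp_le_exp.2 (by nlinarith [sq_nonneg W])
        calc v * Real.exp (-m ^ 2 * v ^ 2) * besselI0 (2 * m * n * v * u) *
              Real.exp (-n ^ 2 * u ^ 2)
            ≤ v * Real.exp (-m ^ 2 * v ^ 2) *
              (Real.sqrt (Real.pi / (2 * (2 * m * n * v * u))) *
                Real.exp (2 * m * n * v * u)) * Real.exp (-n ^ 2 * u ^ 2) :=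
              mul_le_mul_of_nonneg_right (mul_le_mul_of_nonneg_left hI (by positivity))
                (Real.exp_pos _).le
          _ = (v * Real.sqrt (Real.pi / (2 * (2 * m * n * v * u)))) *
              (Real.exp (-m ^ 2 * v ^ 2) * Real.exp (2 * m * n * v * u) *
                Real.exp (-n ^ 2 * u ^ 2)) := by ring
          _ = (v * Real.sqrt (Real.pi / (2 * (2 * m * n * v * u)))) * Real.exp (-W ^ 2) := by
              rw [hexpW]
          _ ≤ (Real.sqrt (Real.pi / (4 * m ^ 2 * n)) * Real.exp (W ^ 2 / 4) +
              Real.sqrt (Real.pi / (4 * m ^ 2))) * Real.exp (-W ^ 2) :=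
              mul_le_mul_of_nonneg_right hvS (Real.exp_pos _).le
          _ = Real.sqrt (Real.pi / (4 * m ^ 2 * n)) *
                (Real.exp (W ^ 2 / 4) * Real.exp (-W ^ 2)) +
              Real.sqrt (Real.pi / (4 * m ^ 2)) * Real.exp (-W ^ 2) := by ring
          _ ≤ Real.sqrt (Real.pi / (4 * m ^ 2 * n)) * Real.exp (-W ^ 2 / 2) +
              Real.sqrt (Real.pi / (4 * m ^ 2)) * Real.exp (-W ^ 2 / 2) :=
              add_le_add (mul_le_mul_of_nonneg_left d1 (by positivity))
                (mul_le_mul_of_nonneg_left d2 (by positivity))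
          _ = E * Real.exp (-W ^ 2 / 2) := by rw [hE]; ring
          _ ≤ E * ((W / m) * Real.exp (-W ^ 2 / 2)) := by
              apply mul_le_mul_of_nonneg_left _ hEnn
              nlinarith [mul_le_mul_of_nonneg_right ((one_le_div hm).2 hWm)
                (Real.exp_pos (-W ^ 2 / 2)).le]
          _ = E * ((v - c) * Real.exp (-(m ^ 2 / 2) * (v - c) ^ 2)) := by
              have h5 : W / m = v - c := by rw [hWdef]; field_simp
              have h6 : -W ^ 2 / 2 = -(m ^ 2 / 2) * (v - c) ^ 2 := by
                rw [hWdef]; ring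
              rw [h5, h6]
      calc (∫ v in Set.Ioi a, v * Real.exp (-m ^ 2 * v ^ 2) * besselI0 (2 * m * n * v * u) *
              Real.exp (-n ^ 2 * u ^ 2)) ≤ _ := hmono
        _ = E * ∫ v in Set.Ioi a, (v - c) * Real.exp (-(m ^ 2 / 2) * (v - c) ^ 2) :=
            integral_const_mul _ _
        _ = _ := by rw [hval]
    have hac : a - c = 1 / δ := by rw [ha, hc]; ring
    calc 2 * m ^ 2 * ∫ v in Set.Ioi a,
            v * Real.exp (-m ^ 2 * v ^ 2) * besselI0 (2 * m * n * v * u) *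
              Real.exp (-n ^ 2 * u ^ 2)
        ≤ 2 * m ^ 2 * (E * ((1 / (2 * (m ^ 2 / 2))) *
            Real.exp (-(m ^ 2 / 2) * (a - c) ^ 2))) :=
          mul_le_mul_of_nonneg_left key (by positivity)
      _ = 2 * E * Real.exp (-(m ^ 2 / 2) * (a - c) ^ 2) := by
          have h9 : m ^ 2 * (1 / (2 * (m ^ 2 / 2))) = 1 := by
            field_simp
          calc 2 * m ^ 2 * (E * ((1 / (2 * (m ^ 2 / 2))) *
              Real.exp (-(m ^ 2 / 2) * (a - c) ^ 2)))
              = 2 * E * Real.exp (-(m ^ 2 / 2) * (a - c) ^ 2) *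
                (m ^ 2 * (1 / (2 * (m ^ 2 / 2)))) := by ring
            _ = 2 * E * Real.exp (-(m ^ 2 / 2) * (a - c) ^ 2) := by rw [h9, mul_one]
      _ ≤ 2 * E * Real.exp (-m ^ 2 / (4 * δ ^ 2)) := by
          rw [hac]
          exact mul_le_mul_of_nonneg_left hexpfin (by positivity)
      _ ≤ (2 * Real.exp (n ^ 2) + 2 * E) * Real.exp (-m ^ 2 / (4 * δ ^ 2)) := by
          nlinarith [mul_pos (Real.exp_pos (n ^ 2)) (Real.exp_pos (-m ^ 2 / (4 * δ ^ 2)))]
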